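/- For p odd and s an invertible Niho exponent over L (the quadratic extension of F, |F| = p^n), W_{L,s}(a) ≥ -p^n for all a ∈ L. -/

import Mathlib

open scoped BigOperators

/-- The Weil sum `W_{F,s}(a) = ∑_{x ∈ F} μ(x^s - a x)`, where `μ` is the canonical
additive character `μ(x) = ζ_p^{Tr_{F/𝔽_p}(x)}` of the finite field `F`. -/
noncomputable def weilSum (p : ℕ) (F : Type) [Field F] [Fintype F]
    [Algebra (ZMod p) F] (s : ℕ) (a : F) : ℂ :=
  ∑ x : F, Complex.exp (2 * Real.pi * Complex.I *
    ((Algebra.trace (ZMod p) F (x ^ s - a * x)).val : ℂ) / (p : ℂ))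

noncomputable def eChar (p : ℕ) (z : ZMod p) : ℂ :=
  Complex.exp (2 * Real.pi * Complex.I * (z.val : ℂ) / (p : ℂ))

lemma eChar_zero (p : ℕ) [NeZero p] : eChar p 0 = 1 := by
  simp [eChar]

lemma eChar_add (p : ℕ) [NeZero p] (z w : ZMod p) :
    eChar p (z + w) = eChar p z * eChar p w := by
  have hp : (p:ℂ) ≠ 0 := Nat.cast_ne_zero.mpr (NeZero.ne p)
  unfold eChar
  rw [← Complex.exp_add]
  have hval : (z.val : ℂ) + (w.val : ℂ)
      = ((z + w).val : ℂ) + (p : ℂ) * (((z.val + w.val) / p : ℕ) : ℂ) := by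
    have h : z.val + w.val = (z + w).val + p * ((z.val + w.val) / p) := by
      rw [ZMod.val_add]
      exact (Nat.mod_add_div _ _).symm
    exact_mod_cast congrArg (Nat.cast : ℕ → ℂ) h
  have key : 2 * Real.pi * Complex.I * ((z + w).val : ℂ) / (p : ℂ)
      = (2 * Real.pi * Complex.I * (z.val : ℂ) / (p:ℂ)
        + 2 * Real.pi * Complex.I * (w.val : ℂ) / (p:ℂ))
        - (((z.val + w.val) / p : ℕ) : ℂ) * (2 * Real.pi * Complex.I) := by
    revert hval
    generalize (z.val : ℂ) = vz
    generalize (w.val : ℂ) = vw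
    generalize (((z + w).val : ℕ) : ℂ) = vzw
    generalize (((z.val + w.val) / p : ℕ) : ℂ) = d
    intro hval
    field_simp
    linear_combination hval.symm
  rw [key, Complex.exp_sub, Complex.exp_nat_mul_two_pi_mul_I, div_one]

lemma eChar_pow (p : ℕ) [NeZero p] (z : ZMod p) : (eChar p z) ^ p = 1 := by
  have hp : (p:ℂ) ≠ 0 := Nat.cast_ne_zero.mpr (NeZero.ne p)
  unfold eChar
  rw [← Complex.exp_nat_mul]
  have h : (p:ℂ) * (2 * Real.pi * Complex.I * (z.val : ℂ) / (p : ℂ))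
      = (z.val : ℂ) * (2 * Real.pi * Complex.I) := by
    field_simp
  rw [h, Complex.exp_nat_mul_two_pi_mul_I]

lemma eChar_eq_one_iff (p : ℕ) [Fact p.Prime] (z : ZMod p) :
    eChar p z = 1 ↔ z = 0 := by
  have hp0 : p ≠ 0 := (Fact.out : p.Prime).ne_zero
  have hp : (p:ℂ) ≠ 0 := Nat.cast_ne_zero.mpr hp0
  constructor
  · intro h
    unfold eChar at h
    rw [Complex.exp_eq_one_iff] at h
    obtain ⟨m, hm⟩ := h
    have h2 : (2 * Real.pi * Complex.I : ℂ) ≠ 0 := by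
      simp [Real.pi_ne_zero, Complex.I_ne_zero]
    have hz : (z.val : ℂ) = (m : ℂ) * (p : ℂ) := by
      rw [mul_div_assoc] at hm
      have := mul_left_cancel₀ h2 (by rw [hm]; ring : 2 * Real.pi * Complex.I * ((z.val : ℂ)/(p:ℂ)) = 2 * Real.pi * Complex.I * (m:ℂ))
      exact (div_eq_iff hp).mp this
    have hzint : (z.val : ℤ) = m * p := by exact_mod_cast hz
    have hdvd : (p : ℕ) ∣ z.val := by
      have : (p:ℤ) ∣ (z.val : ℤ) := ⟨m, by linarith⟩
      exact_mod_cast this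
    have := Nat.eq_zero_of_dvd_of_lt hdvd (z.val_lt)
    · exact (ZMod.val_eq_zero z).mp (by omega)
  · intro h; subst h; exact eChar_zero p

/-- for `p` odd and `s` an invertible Niho exponent over `L`,
`W_{L,s}(a)` is a rational integer `≥ -p^n` for all `a ∈ L`. -/
theorem weil_sum_lower_bound (p n : ℕ) [Fact p.Prime] (hn : 0 < n)
    (F L : Type) [Field F] [Fintype F] [Field L] [Fintype L]
    [Algebra (ZMod p) L] [Algebra F L]
    (hF : Fintype.card F = p ^ n) (hL : Fintype.card L = p ^ (2 * n))
    (k s : ℕ) (hsk : s = 1 + k * (p ^ n - 1)) (hs : Nat.Coprime s (p ^ (2 * n) - 1))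
    (hp : Odd p) (a : L) :
    ∃ m : ℤ, weilSum p L s a = (m : ℂ) ∧ -((p : ℤ) ^ n) ≤ m := by
  classical
  have hprime : p.Prime := Fact.out
  haveI : NeZero p := ⟨hprime.ne_zero⟩
  set q : ℕ := p ^ n with hqdef
  have hq2 : 2 ≤ q := by
    calc 2 ≤ p := hprime.two_le
    _ ≤ p ^ n := Nat.le_self_pow hn.ne' p
  -- characteristic and instances
  haveI hCharL : CharP L p := charP_of_injective_algebraMap (algebraMap (ZMod p) L).injective p
  haveI hCharF : CharP F p := (algebraMap F L).charP (algebraMap F L).injective p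
  haveI : Algebra (ZMod p) F := ZMod.algebra F p
  haveI : IsScalarTower (ZMod p) F L :=
    IsScalarTower.of_algebraMap_eq' (RingHom.ext_zmod _ _)
  -- the additive character
  set μ : L → ℂ := fun t => eChar p (Algebra.trace (ZMod p) L t) with hμ
  have hWdef : weilSum p L s a = ∑ x : L, μ (x ^ s - a * x) := rfl
  -- transitivity of trace
  have htr : ∀ y : L, Algebra.trace (ZMod p) L y
      = Algebra.trace (ZMod p) F (Algebra.trace F L y) := fun y =>
    (Algebra.trace_trace (R := ZMod p) (S := F) y).symm
  -- Step A: the character sum over F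
  have hsumF : ∀ t : L, ∑ c : F, μ (algebraMap F L c * t)
      = if Algebra.trace F L t = 0 then (q : ℂ) else 0 := by
    intro t
    set T : F := Algebra.trace F L t with hT
    have hterm : ∀ c : F, μ (algebraMap F L c * t)
        = eChar p (Algebra.trace (ZMod p) F (c * T)) := by
      intro c
      have h1 : algebraMap F L c * t = c • t := (Algebra.smul_def c t).symm
      have h2 : Algebra.trace F L (c • t) = c * T := by
        rw [map_smul, smul_eq_mul]
      simp only [hμ, h1, htr, h2]
    simp only [hterm]
    by_cases h0 : T = 0
    · simp [h0, eChar_zero, Finset.card_univ, hF]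
    · rw [if_neg h0]
      -- nondegeneracy gives a c₀ with trace (c₀ * T) ≠ 0
      haveI : FiniteDimensional (ZMod p) F := Module.Finite.of_finite
      obtain ⟨c₀, hc₀⟩ : ∃ c₀ : F, Algebra.trace (ZMod p) F (c₀ * T) ≠ 0 := by
        have hnd := traceForm_nondegenerate (ZMod p) F
        by_contra hf
        push_neg at hf
        refine h0 (hnd.1 T ?_)
        intro b
        rw [Algebra.traceForm_apply, mul_comm]
        exact hf b
      set S : ℂ := ∑ c : F, eChar p (Algebra.trace (ZMod p) F (c * T)) with hS
      have hshift : eChar p (Algebra.trace (ZMod p) F (c₀ * T)) * S = S := by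
        calc eChar p (Algebra.trace (ZMod p) F (c₀ * T)) * S
            = ∑ c : F, eChar p (Algebra.trace (ZMod p) F ((c₀ + c) * T)) := by
              rw [hS, Finset.mul_sum]
              exact Finset.sum_congr rfl fun c _ => by rw [add_mul, map_add, eChar_add]
          _ = S := Equiv.sum_comp (Equiv.addLeft c₀)
              (fun c => eChar p (Algebra.trace (ZMod p) F (c * T)))
      have hne : eChar p (Algebra.trace (ZMod p) F (c₀ * T)) ≠ 1 := by
        intro h; exact hc₀ ((eChar_eq_one_iff p _).mp h)
      have : (eChar p (Algebra.trace (ZMod p) F (c₀ * T)) - 1) * S = 0 := by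
        rw [sub_mul, one_mul, hshift, sub_self]
      rcases mul_eq_zero.mp this with h | h
      · exact absurd (by linear_combination h) hne
      · exact h
  -- Step B: sum over units of F
  have hsumFx : ∀ t : L, ∑ c : Fˣ, μ (algebraMap F L (c : F) * t)
      = (if Algebra.trace F L t = 0 then (q : ℂ) else 0) - 1 := by
    intro t
    have h0 : μ (algebraMap F L (0 : F) * t) = 1 := by
      simp only [map_zero, zero_mul, hμ]
      simpa using eChar_zero p
    have hsplit : ∑ c : F, μ (algebraMap F L c * t)
        = μ (algebraMap F L (0 : F) * t)
          + ∑ c ∈ Finset.univ.erase (0 : F), μ (algebraMap F L c * t) :=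
      (Finset.add_sum_erase _ _ (Finset.mem_univ 0)).symm
    have hunits : ∑ c : Fˣ, μ (algebraMap F L (c : F) * t)
        = ∑ c ∈ Finset.univ.erase (0 : F), μ (algebraMap F L c * t) := by
      have e2 : ∑ c : Fˣ, μ (algebraMap F L (c : F) * t)
          = ∑ c : {x : F // x ≠ 0}, μ (algebraMap F L (c : F) * t) :=
        Fintype.sum_equiv unitsEquivNeZero _ _ (fun c => rfl)
      have e1 : ∑ c ∈ Finset.univ.erase (0 : F), μ (algebraMap F L c * t)
          = ∑ c : {x : F // x ≠ 0}, μ (algebraMap F L (c : F) * t) :=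
        Finset.sum_subtype _ (fun x => by simp) _
      rw [e2, ← e1]
    rw [hunits, ← hsumF t, hsplit, h0]
    ring
  -- Niho property
  have hpow : ∀ c : Fˣ, (algebraMap F L (c : F)) ^ s = algebraMap F L (c : F) := by
    intro c
    have h1 : (c : F) ^ (q - 1) = 1 := by
      rw [← hF]; exact FiniteField.pow_card_sub_one_eq_one _ c.ne_zero
    have h2 : (c : F) ^ s = (c : F) := by
      rw [hsk, pow_add, pow_one, mul_comm k, pow_mul, h1, one_pow, mul_one]
    rw [← map_pow, h2]
  have hcne : ∀ c : Fˣ, algebraMap F L (c : F) ≠ 0 := fun c h =>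
    c.ne_zero ((algebraMap F L).injective (by rw [h, map_zero]))
  -- main identity
  have hcard : ((Fintype.card Fˣ : ℕ) : ℂ) = (q : ℂ) - 1 := by
    rw [Fintype.card_units, hF]
    have : 1 ≤ q := by omega
    push_cast [Nat.cast_sub this]
    ring
  have hmain : ((q : ℂ) - 1) * weilSum p L s a
      = ∑ x : L, ((if Algebra.trace F L (x ^ s - a * x) = 0 then (q : ℂ) else 0) - 1) := by
    calc ((q : ℂ) - 1) * weilSum p L s a
        = ∑ _c : Fˣ, weilSum p L s a := by
          rw [Finset.sum_const, Finset.card_univ, nsmul_eq_mul, hcard]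
      _ = ∑ c : Fˣ, ∑ x : L, μ ((algebraMap F L (c : F) * x) ^ s
            - a * (algebraMap F L (c : F) * x)) := by
          refine Finset.sum_congr rfl fun c _ => ?_
          rw [hWdef]
          exact (Equiv.sum_comp (Equiv.mulLeft₀ (algebraMap F L (c : F)) (hcne c))
            (fun x => μ (x ^ s - a * x))).symm
      _ = ∑ c : Fˣ, ∑ x : L, μ (algebraMap F L (c : F) * (x ^ s - a * x)) := by
          refine Finset.sum_congr rfl fun c _ => Finset.sum_congr rfl fun x _ => ?_
          rw [mul_pow, hpow c]
          ring_nf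
      _ = ∑ x : L, ∑ c : Fˣ, μ (algebraMap F L (c : F) * (x ^ s - a * x)) :=
          Finset.sum_comm
      _ = ∑ x : L, ((if Algebra.trace F L (x ^ s - a * x) = 0 then (q : ℂ) else 0) - 1) :=
          Finset.sum_congr rfl fun x _ => hsumFx _
  -- counting
  set N : ℕ := (Finset.univ.filter
      (fun x : L => Algebra.trace F L (x ^ s - a * x) = 0)).card with hNdef
  have hsum2 : ∑ x : L, ((if Algebra.trace F L (x ^ s - a * x) = 0 then (q : ℂ) else 0) - 1)
      = (q : ℂ) * N - ((q : ℂ)) ^ 2 := by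
    rw [Finset.sum_sub_distrib]
    have h1 : ∑ x : L, (if Algebra.trace F L (x ^ s - a * x) = 0 then (q : ℂ) else 0)
        = (N : ℂ) * q := by
      rw [← Finset.sum_filter, Finset.sum_const, nsmul_eq_mul, hNdef]
    have h2 : ∑ _x : L, (1 : ℂ) = ((q : ℂ)) ^ 2 := by
      rw [Finset.sum_const, Finset.card_univ, hL, nsmul_eq_mul, mul_one, hqdef]
      push_cast
      rw [mul_comm 2 n, pow_mul]
    rw [h1, h2]
    ring
  have hN1 : 1 ≤ N := by
    have hs0 : s ≠ 0 := by omega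
    have : (0 : L) ∈ Finset.univ.filter
        (fun x : L => Algebra.trace F L (x ^ s - a * x) = 0) := by
      simp [zero_pow hs0]
    exact Finset.card_pos.mpr ⟨0, this⟩
  -- integrality
  have hint : IsIntegral ℤ (weilSum p L s a) := by
    rw [hWdef]
    refine IsIntegral.sum _ (fun x _ => ?_)
    refine ⟨Polynomial.X ^ p - Polynomial.C 1,
      Polynomial.monic_X_pow_sub_C 1 hprime.ne_zero, ?_⟩
    have hpe : (μ (x ^ s - a * x)) ^ p = 1 := eChar_pow p _
    simp [Polynomial.eval₂_sub, Polynomial.eval₂_pow, hpe]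
  -- extract the integer
  have hq2' : (2 : ℚ) ≤ (q : ℚ) := by exact_mod_cast hq2
  have hqQ : ((q : ℚ) - 1) ≠ 0 := by linarith
  have hqC : ((q : ℂ) - 1) ≠ 0 := by
    intro h
    have : (q : ℂ) = 1 := by linear_combination h
    have : q = 1 := by exact_mod_cast this
    omega
  set r : ℚ := ((q : ℚ) * N - ((q : ℚ)) ^ 2) / ((q : ℚ) - 1) with hrdef
  have hWr : weilSum p L s a = (r : ℂ) := by
    have hWeq : ((q : ℂ) - 1) * weilSum p L s a = (q : ℂ) * N - ((q : ℂ)) ^ 2 :=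
      hmain.trans hsum2
    have hrC : (r : ℂ) = ((q : ℂ) * N - ((q : ℂ)) ^ 2) / ((q : ℂ) - 1) := by
      rw [hrdef]
      push_cast
      ring
    rw [hrC, eq_div_iff hqC, mul_comm, hWeq]
  have hintr : IsIntegral ℤ r := by
    rw [hWr] at hint
    rw [← eq_ratCast (algebraMap ℚ ℂ) r] at hint
    exact (isIntegral_algebraMap_iff ((algebraMap ℚ ℂ).injective)).mp hint
  obtain ⟨m, hm⟩ := IsIntegrallyClosed.isIntegral_iff.mp hintr
  have hmq : (m : ℚ) = r := by rw [← hm]; simp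
  refine ⟨m, ?_, ?_⟩
  · rw [hWr, ← hmq]
    push_cast
    ring
  · have hmid : (m : ℚ) * ((q : ℚ) - 1) = (q : ℚ) * N - ((q : ℚ)) ^ 2 := by
      rw [hmq, hrdef, div_mul_cancel₀ _ hqQ]
    have hZ : m * ((q : ℤ) - 1) = (q : ℤ) * N - ((q : ℤ)) ^ 2 := by
      exact_mod_cast hmid
    have hN1' : (1 : ℤ) ≤ (N : ℤ) := by exact_mod_cast hN1
    have hq2'' : (2 : ℤ) ≤ (q : ℤ) := by exact_mod_cast hq2
    have hineq : -(q : ℤ) * ((q : ℤ) - 1) ≤ m * ((q : ℤ) - 1) := by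
      rw [hZ]
      nlinarith
    have hm_ge : -(q : ℤ) ≤ m := by
      by_contra hcon
      push_neg at hcon
      have h3 : (0 : ℤ) < (q : ℤ) - 1 := by linarith
      have h4 := mul_lt_mul_of_pos_right hcon h3
      linarith
    have hqpn : ((q : ℤ)) = (p : ℤ) ^ n := by rw [hqdef]; push_cast; ring
    rw [← hqpn]
    exact hm_ge
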